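/- There is no sequence (B_i)_{i∈ℕ} of subsets of the Cantor space 2^ℕ, each having the Baire property, that separates E₀, i.e., such that for all x, y ∈ 2^ℕ one has x E₀ y if and only if (for every i ∈ ℕ, x ∈ B_i ↔ y ∈ B_i). -/
import Mathlib

open Set Filter

/-- `E₀`: eventual equality on Cantor space. -/
def E0 (x y : ℕ → Bool) : Prop := ∃ N : ℕ, ∀ n ≥ N, x n = y n

namespace StmtTwo

/-- countable union of meagre sets is meagre (general countable index). -/
lemma isMeagre_iUnion' {ι : Type*} [Countable ι] {X : Type*} [TopologicalSpace X]
    {s : ι → Set X} (hs : ∀ i, IsMeagre (s i)) : IsMeagre (⋃ i, s i) := by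
  rw [IsMeagre, compl_iUnion]
  exact countable_iInter_mem.mpr hs

lemma nowhereDense_isMeagre {X : Type*} [TopologicalSpace X] {s : Set X}
    (h : IsNowhereDense s) : IsMeagre s :=
  isMeagre_iff_countable_union_isNowhereDense.mpr
    ⟨{s}, by simpa using h, countable_singleton _, by simp⟩

/-- The bit-flip homeomorphism of Cantor space. -/
def flipH (v : ℕ → Bool) : Homeomorph (ℕ → Bool) (ℕ → Bool) where
  toFun x := fun n => xor (x n) (v n)
  invFun x := fun n => xor (x n) (v n)
  left_inv x := by funext n; simp [Bool.xor_assoc]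
  right_inv x := by funext n; simp [Bool.xor_assoc]
  continuous_toFun := by
    apply continuous_pi
    intro n
    exact (continuous_of_discreteTopology (f := fun b : Bool => xor b (v n))).comp (continuous_apply n)
  continuous_invFun := by
    apply continuous_pi
    intro n
    exact (continuous_of_discreteTopology (f := fun b : Bool => xor b (v n))).comp (continuous_apply n)

lemma flip_preimage_meagre (v : ℕ → Bool) {s : Set (ℕ → Bool)} (hs : IsMeagre s) :
    IsMeagre ((flipH v) ⁻¹' s) :=
  hs.preimage_of_isOpenMap (flipH v).continuous (flipH v).isOpenMap

/-- Sets of sequences agreeing with `x` from `N` on are nowhere dense. -/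
lemma tail_set_nowhereDense (x : ℕ → Bool) (N : ℕ) :
    IsNowhereDense {y : ℕ → Bool | ∀ n ≥ N, y n = x n} := by
  set S : Set (ℕ → Bool) := {y : ℕ → Bool | ∀ n ≥ N, y n = x n} with hS
  have hclosed : IsClosed S := by
    have : S = ⋂ n, {y : ℕ → Bool | n ≥ N → y n = x n} := by
      ext y; simp [hS]
    rw [this]
    refine isClosed_iInter fun n => ?_
    by_cases h : n ≥ N
    · have : {y : ℕ → Bool | n ≥ N → y n = x n} = (fun y : ℕ → Bool => y n) ⁻¹' {x n} := by
        ext y; simp [h]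
      rw [this]
      exact isClosed_singleton.preimage (continuous_apply n)
    · have : {y : ℕ → Bool | n ≥ N → y n = x n} = univ := by
        ext y; simp [h]
      rw [this]; exact isClosed_univ
  have hint : interior S = ∅ := by
    by_contra h
    obtain ⟨y, hy⟩ := nonempty_iff_ne_empty.mpr h
    obtain ⟨I, t, hIt, hsub⟩ := isOpen_pi_iff.mp isOpen_interior y hy
    set M : ℕ := max N (I.sup id + 1) with hM
    have hMI : M ∉ I := by
      intro hmem
      have h1 : M ≤ I.sup id := Finset.le_sup (f := id) hmem
      have h2 : I.sup id + 1 ≤ M := le_max_right _ _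
      omega
    set z : ℕ → Bool := Function.update y M (!(y M)) with hz
    have hzpi : z ∈ (I : Set ℕ).pi t := by
      intro a ha
      have hne : a ≠ M := fun h => hMI (h ▸ ha)
      rw [hz, Function.update_of_ne hne]
      exact (hIt a ha).2
    have hzS : z ∈ S := interior_subset (hsub hzpi)
    have hyS : y ∈ S := interior_subset hy
    have hMN : M ≥ N := le_max_left _ _
    have h1 : z M = x M := hzS M hMN
    have h2 : y M = x M := hyS M hMN
    rw [hz, Function.update_self, h2] at h1
    simp at h1
  rw [IsNowhereDense, hclosed.closure_eq, hint]

/-- Each `E₀`-class is meagre. -/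
lemma e0_class_meagre (x : ℕ → Bool) : IsMeagre {y : ℕ → Bool | E0 x y} := by
  have : {y : ℕ → Bool | E0 x y} ⊆ ⋃ N : ℕ, {y : ℕ → Bool | ∀ n ≥ N, y n = x n} := by
    rintro y ⟨N, hN⟩
    exact mem_iUnion.mpr ⟨N, fun n hn => (hN n hn).symm⟩
  refine (isMeagre_iUnion fun N => ?_).mono this
  exact nowhereDense_isMeagre (tail_set_nowhereDense x N)

/-- Topological zero-one law for `E₀`-invariant sets with the Baire property. -/
lemma zero_one (A : Set (ℕ → Bool)) (U : Set (ℕ → Bool)) (hU : IsOpen U)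
    (hm : IsMeagre (symmDiff A U))
    (inv : ∀ x y, E0 x y → (x ∈ A ↔ y ∈ A)) :
    IsMeagre A ∨ IsMeagre Aᶜ := by
  rcases eq_empty_or_nonempty U with hUe | ⟨u, hu⟩
  · left
    rw [hUe] at hm
    simpa [Set.symmDiff_def] using hm
  · right
    obtain ⟨I, t, hIt, hsub⟩ := isOpen_pi_iff.mp hU u hu
    set N : ℕ := I.sup id + 1 with hN
    have hIN : ∀ a ∈ I, a < N := fun a ha =>
      Nat.lt_succ_of_le (Finset.le_sup (f := id) ha)
    -- the basic cylinder around u is contained in U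
    have hcyl : ∀ y : ℕ → Bool, (∀ n < N, y n = u n) → y ∈ U := by
      intro y hy
      apply hsub
      intro a ha
      rw [hy a (hIN a ha)]
      exact (hIt a ha).2
    -- flips indexed by functions on Fin N
    set V : (Fin N → Bool) → (ℕ → Bool) := fun w n => if h : n < N then w ⟨n, h⟩ else false
      with hV
    have key : Aᶜ ⊆ ⋃ w : Fin N → Bool, (flipH (V w)) ⁻¹' (symmDiff A U) := by
      intro x hx
      set w : Fin N → Bool := fun k => xor (x k) (u k) with hw
      refine mem_iUnion.mpr ⟨w, ?_⟩
      have hEx : E0 x (flipH (V w) x) := by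
        refine ⟨N, fun n hn => ?_⟩
        simp only [flipH, Homeomorph.homeomorph_mk_coe, Equiv.coe_fn_mk, hV]
        rw [dif_neg (by omega)]
        simp
      have hmemU : flipH (V w) x ∈ U := by
        apply hcyl
        intro n hn
        simp only [flipH, Homeomorph.homeomorph_mk_coe, Equiv.coe_fn_mk, hV]
        rw [dif_pos hn]
        simp [hw, Bool.xor_assoc]
      have hmemA : flipH (V w) x ∉ A := fun h => hx ((inv x _ hEx).mpr h)
      simp only [mem_preimage, Set.mem_symmDiff]
      exact Or.inr ⟨hmemU, hmemA⟩
    exact (isMeagre_iUnion' fun w => flip_preimage_meagre _ hm).mono key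

end StmtTwo

open StmtTwo in
/-- no countable family of sets with the Baire property
separates `E₀`. -/
theorem stmt_2 :
    ¬ ∃ B : ℕ → Set (ℕ → Bool),
      (∀ i : ℕ, ∃ U : Set (ℕ → Bool), IsOpen U ∧ IsMeagre (symmDiff (B i) U)) ∧
      (∀ x y : ℕ → Bool, E0 x y ↔ ∀ i : ℕ, (x ∈ B i ↔ y ∈ B i)) := by
  classical
  rintro ⟨B, hBP, hsep⟩
  have inv : ∀ i x y, E0 x y → (x ∈ B i ↔ y ∈ B i) := fun i x y h => (hsep x y).1 h i
  have zo : ∀ i, IsMeagre (B i) ∨ IsMeagre (B i)ᶜ := by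
    intro i
    obtain ⟨U, hUo, hUm⟩ := hBP i
    exact zero_one (B i) U hUo hUm (inv i)
  set M : Set (ℕ → Bool) := ⋃ i, (if IsMeagre (B i) then B i else (B i)ᶜ) with hMdef
  have hM : IsMeagre M := by
    refine isMeagre_iUnion' fun i => ?_
    split_ifs with h
    · exact h
    · exact (zo i).resolve_left h
  have hagree : ∀ x y : ℕ → Bool, x ∉ M → y ∉ M → ∀ i, (x ∈ B i ↔ y ∈ B i) := by
    intro x y hx hy i
    have hx' : x ∉ (if IsMeagre (B i) then B i else (B i)ᶜ) :=
      fun h => hx (mem_iUnion.mpr ⟨i, h⟩)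
    have hy' : y ∉ (if IsMeagre (B i) then B i else (B i)ᶜ) :=
      fun h => hy (mem_iUnion.mpr ⟨i, h⟩)
    split_ifs at hx' hy' with h
    · simp [hx', hy']
    · simp only [mem_compl_iff, not_not] at hx' hy'
      simp [hx', hy']
  -- pick x outside M
  have hx : Mᶜ.Nonempty := (dense_of_mem_residual hM).nonempty
  obtain ⟨x, hxM⟩ := hx
  -- pick y outside M and outside the class of x
  have hMc : IsMeagre (M ∪ {y : ℕ → Bool | E0 x y}) := by
    have : M ∪ {y : ℕ → Bool | E0 x y} ⊆ ⋃ b : Bool, (if b then M else {y : ℕ → Bool | E0 x y}) := by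
      rintro z (hz | hz)
      · exact mem_iUnion.mpr ⟨true, by simpa using hz⟩
      · exact mem_iUnion.mpr ⟨false, by simpa using hz⟩
    refine (isMeagre_iUnion' fun b => ?_).mono this
    cases b
    · simpa using e0_class_meagre x
    · simpa using hM
  obtain ⟨y, hyc⟩ := (dense_of_mem_residual hMc).nonempty
  rw [mem_compl_iff, mem_union, not_or] at hyc
  obtain ⟨hyM, hyE⟩ := hyc
  exact hyE ((hsep x y).2 (hagree x y hxM hyM))
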